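/- arXiv:1312.2338 — 5 statements merged into one kernel-verified Lean document; each statement's English description precedes it below -/
import Mathlib

section
/- For positive reals P_1, P_2, the quantity α = (P_1/P_2)·((−1+√(1+P_2+P_1 P_2))/(1+P_1))² satisfies the coexistence equation (√P_1 + √(α P_2))² / (1 + (1−α)P_2) = P_1, and moreover 0 ≤ α ≤ 1. -/
/-- The SISO relay ratio α = (P₁/P₂)·((−1+√(1+P₂+P₁P₂))/(1+P₁))² satisfies the
coexistence equation (√P₁ + √(αP₂))²/(1+(1−α)P₂) = P₁ and 0 ≤ α ≤ 1. -/
theorem siso_relay_ratio_coexistence (P₁ P₂ : ℝ) (h₁ : 0 < P₁) (h₂ : 0 < P₂) :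
    let α := (P₁ / P₂) * ((-1 + Real.sqrt (1 + P₂ + P₁ * P₂)) / (1 + P₁)) ^ 2
    (Real.sqrt P₁ + Real.sqrt (α * P₂)) ^ 2 / (1 + (1 - α) * P₂) = P₁ ∧
      0 ≤ α ∧ α ≤ 1 := by
  intro α
  have hαdef : α = (P₁ / P₂) * ((-1 + Real.sqrt (1 + P₂ + P₁ * P₂)) / (1 + P₁)) ^ 2 := rfl
  obtain ⟨s, hs⟩ : ∃ s, Real.sqrt (1 + P₂ + P₁ * P₂) = s := ⟨_, rfl⟩
  obtain ⟨p, hp⟩ : ∃ p, Real.sqrt P₁ = p := ⟨_, rfl⟩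
  have hssq : s ^ 2 = 1 + P₂ + P₁ * P₂ := by
    rw [← hs, sq, Real.mul_self_sqrt (by nlinarith)]
  have hs0 : 0 ≤ s := by rw [← hs]; exact Real.sqrt_nonneg _
  have hs1 : 1 ≤ s := by nlinarith
  have hp2 : p ^ 2 = P₁ := by rw [← hp, sq, Real.mul_self_sqrt h₁.le]
  have hp0 : 0 ≤ p := by rw [← hp]; exact Real.sqrt_nonneg _
  rw [hs] at hαdef
  have hP1 : (0:ℝ) < 1 + P₁ := by linarith
  have hαeq : α = P₁ * (s - 1) ^ 2 / (P₂ * (1 + P₁) ^ 2) := by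
    rw [hαdef]; field_simp; ring_nf
  have hαle : α ≤ 1 := by
    rw [hαeq, div_le_one (by positivity)]
    have h1 : (s - 1) ^ 2 ≤ P₂ * (1 + P₁) := by nlinarith
    nlinarith
  have hα0 : 0 ≤ α := by rw [hαeq]; positivity
  refine ⟨?_, hα0, hαle⟩
  have hαP2 : α * P₂ = (p * ((s - 1) / (1 + P₁))) ^ 2 := by
    rw [hαeq, mul_pow, hp2]; field_simp
  have hsqrt : Real.sqrt (α * P₂) = p * ((s - 1) / (1 + P₁)) := by
    rw [hαP2, Real.sqrt_sq (mul_nonneg hp0 (div_nonneg (by linarith) hP1.le))]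
  rw [hsqrt, hp]
  have hden : 1 + (1 - α) * P₂ = (s + P₁) ^ 2 / (1 + P₁) ^ 2 := by
    rw [hαeq]; field_simp; linear_combination (-(1+P₁)) * hssq
  rw [hden, div_div_eq_mul_div, div_eq_iff (by positivity)]
  have hnum : p + p * ((s - 1) / (1 + P₁)) = p * ((s + P₁) / (1 + P₁)) := by
    field_simp; ring
  rw [hnum, mul_pow, hp2]
  field_simp
end

section
/- The SISO relay ratio α(P_1, P_2) = (P_1/P_2)·((−1+√(1+P_2+P_1 P_2))/(1+P_1))² is nondecreasing in P_1 for each fixed P_2 > 0. -/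
lemma siso_rewrite (P₂ : ℝ) (h₂ : 0 < P₂) (P₁ : ℝ) (h₁ : 0 < P₁) :
    (P₁ / P₂) * ((-1 + Real.sqrt (1 + P₂ + P₁ * P₂)) / (1 + P₁)) ^ 2 =
      P₁ * P₂ / (1 + Real.sqrt (1 + P₂ + P₁ * P₂)) ^ 2 := by
  set u := Real.sqrt (1 + P₂ + P₁ * P₂) with hu
  have ha : (0:ℝ) ≤ 1 + P₂ + P₁ * P₂ := by positivity
  have hu2 : u ^ 2 = 1 + P₂ + P₁ * P₂ := Real.sq_sqrt ha
  have hu0 : 0 ≤ u := Real.sqrt_nonneg _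
  have hupos : 0 < 1 + u := by linarith
  have hP1 : (0:ℝ) < 1 + P₁ := by linarith
  have key : (-1 + u) / (1 + P₁) = P₂ / (1 + u) := by
    rw [div_eq_div_iff hP1.ne' hupos.ne']
    nlinarith [hu2]
  rw [key]
  field_simp

/-- The SISO relay ratio α(P₁,P₂) = (P₁/P₂)·((−1+√(1+P₂+P₁P₂))/(1+P₁))² is
nondecreasing in P₁ for each fixed P₂ > 0. -/
theorem siso_relay_ratio_mono_P1 (P₂ : ℝ) (h₂ : 0 < P₂)
    (P₁ P₁' : ℝ) (h₁ : 0 < P₁) (h : P₁ ≤ P₁') :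
    (P₁ / P₂) * ((-1 + Real.sqrt (1 + P₂ + P₁ * P₂)) / (1 + P₁)) ^ 2 ≤
      (P₁' / P₂) * ((-1 + Real.sqrt (1 + P₂ + P₁' * P₂)) / (1 + P₁')) ^ 2 := by
  have h₁' : 0 < P₁' := lt_of_lt_of_le h₁ h
  rw [siso_rewrite P₂ h₂ P₁ h₁, siso_rewrite P₂ h₂ P₁' h₁']
  set u := Real.sqrt (1 + P₂ + P₁ * P₂) with hu
  set v := Real.sqrt (1 + P₂ + P₁' * P₂) with hv
  have ha : (0:ℝ) ≤ 1 + P₂ + P₁ * P₂ := by positivity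
  have hb : (0:ℝ) ≤ 1 + P₂ + P₁' * P₂ := by positivity
  have hu2 : u ^ 2 = 1 + P₂ + P₁ * P₂ := Real.sq_sqrt ha
  have hv2 : v ^ 2 = 1 + P₂ + P₁' * P₂ := Real.sq_sqrt hb
  have hu0 : 0 ≤ u := Real.sqrt_nonneg _
  have hv0 : 0 ≤ v := Real.sqrt_nonneg _
  have huv : u ≤ v := Real.sqrt_le_sqrt (by nlinarith)
  rw [div_le_div_iff₀ (by positivity) (by positivity)]
  nlinarith [mul_nonneg (mul_nonneg (sub_nonneg.2 huv) hu0) hv0,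
    mul_nonneg (sub_nonneg.2 huv) hu0, mul_nonneg (sub_nonneg.2 huv) hv0,
    sub_nonneg.2 huv, sq_nonneg (v - u), mul_nonneg (sub_nonneg.2 huv) h₂.le]
end

section
/- For each fixed P_1 > 0, the secondary rate R(P_2) = log(1 + (1 − α(P_1,P_2)) P_3) with α(P_1,P_2) as in the SISO coexistence formula and P_3 = c·P_2 for a fixed constant c > 0 (i.e., P_T scaling with fixed channels) is nondecreasing in P_T; equivalently, (1−α(P_1,P_2))·P_2 is nondecreasing in P_2. -/
lemma siso_aux (P₁ P₂ : ℝ) (h₁ : 0 < P₁) (h₂ : 0 < P₂) :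
    (1 - (P₁ / P₂) * ((-1 + Real.sqrt (1 + P₂ + P₁ * P₂)) / (1 + P₁)) ^ 2) * P₂ =
      P₂ / (1 + P₁) + 2 * P₁ * (Real.sqrt (1 + P₂ + P₁ * P₂) - 1) / (1 + P₁) ^ 2 := by
  have harg : (0:ℝ) ≤ 1 + P₂ + P₁ * P₂ := by nlinarith
  set s := Real.sqrt (1 + P₂ + P₁ * P₂) with hs
  have hsq : s ^ 2 = 1 + P₂ + P₁ * P₂ := Real.sq_sqrt harg
  have hP : (1 + P₁) ≠ 0 := by positivity
  field_simp
  linear_combination (- P₁) * hsq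

/-- The effective secondary power (1−α(P₁,P₂))·P₂ is nondecreasing in P₂, where
α(P₁,P₂) = (P₁/P₂)·((−1+√(1+P₂+P₁P₂))/(1+P₁))² is the SISO relay ratio. -/
theorem siso_effective_power_mono_P2 (P₁ : ℝ) (h₁ : 0 < P₁)
    (P₂ P₂' : ℝ) (h₂ : 0 < P₂) (h : P₂ ≤ P₂') :
    (1 - (P₁ / P₂) * ((-1 + Real.sqrt (1 + P₂ + P₁ * P₂)) / (1 + P₁)) ^ 2) * P₂ ≤
      (1 - (P₁ / P₂') * ((-1 + Real.sqrt (1 + P₂' + P₁ * P₂')) / (1 + P₁)) ^ 2) * P₂' := by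
  have h₂' : 0 < P₂' := lt_of_lt_of_le h₂ h
  rw [siso_aux P₁ P₂ h₁ h₂, siso_aux P₁ P₂' h₁ h₂']
  have hsqrt : Real.sqrt (1 + P₂ + P₁ * P₂) ≤ Real.sqrt (1 + P₂' + P₁ * P₂') := by
    apply Real.sqrt_le_sqrt; nlinarith
  have hP : (0:ℝ) < 1 + P₁ := by linarith
  gcongr
end

section
/- The function X ↦ log det(X) is concave on the cone of Hermitian positive definite n×n matrices: for positive definite A, B and t ∈ [0,1], log det(tA + (1−t)B) ≥ t·log det(A) + (1−t)·log det(B). -/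
open Matrix
open scoped ComplexOrder

lemma posDef_conj_of_isUnit {n : ℕ} {B C : Matrix (Fin n) (Fin n) ℂ}
    (hB : B.PosDef) (hC : IsUnit C.det) : (Cᴴ * B * C).PosDef := by
  refine Matrix.PosDef.of_dotProduct_mulVec_pos (isHermitian_conjTranspose_mul_mul C hB.1) fun x hx => ?_
  have hCx : C *ᵥ x ≠ 0 := by
    intro h
    exact hx ((Matrix.mulVec_injective_iff_isUnit.2 ((Matrix.isUnit_iff_isUnit_det C).2 hC)).eq_iff.mp (by simpa using h))
  simpa only [star_mulVec, dotProduct_mulVec, vecMul_vecMul] using hB.dotProduct_mulVec_pos hCx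

/-- log det is concave on Hermitian positive definite matrices:
log det(tA + (1−t)B) ≥ t·log det(A) + (1−t)·log det(B). -/
theorem logDet_concave {n : ℕ}
    (A B : Matrix (Fin n) (Fin n) ℂ) (hA : A.PosDef) (hB : B.PosDef)
    (t : ℝ) (ht0 : 0 ≤ t) (ht1 : t ≤ 1) :
    t * Real.log (A.det.re) + (1 - t) * Real.log (B.det.re) ≤
      Real.log ((((t : ℂ) • A + ((1 - t : ℝ) : ℂ) • B).det).re) := by
  classical
  open scoped MatrixOrder in set S := CFC.sqrt A with hSdef
  open scoped MatrixOrder in have hSH : S.IsHermitian := (CFC.sqrt_nonneg A).posSemidef.1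
  open scoped MatrixOrder in have hSS : S * S = A := CFC.sqrt_mul_sqrt_self A hA.posSemidef.nonneg
  have hdetA : (0 : ℂ) < A.det := hA.det_pos
  have hdetSS : S.det * S.det = A.det := by rw [← det_mul, hSS]
  have hdetS : IsUnit S.det :=
    isUnit_iff_ne_zero.2 fun h => hdetA.ne' (by rw [← hdetSS, h, mul_zero])
  have hS1 : S * S⁻¹ = 1 := mul_nonsing_inv S hdetS
  have h1S : S⁻¹ * S = 1 := nonsing_inv_mul S hdetS
  have hSinvH : (S⁻¹)ᴴ = S⁻¹ := by rw [conjTranspose_nonsing_inv, hSH.eq]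
  set M := S⁻¹ * B * S⁻¹ with hMdef
  have hM : M.PosDef := by
    have := posDef_conj_of_isUnit hB (S.isUnit_nonsing_inv_det hdetS)
    rwa [hSinvH] at this
  have hSMS : S * M * S = B := by
    rw [hMdef, ← Matrix.mul_assoc, ← Matrix.mul_assoc, hS1, Matrix.one_mul,
      Matrix.mul_assoc, h1S, Matrix.mul_one]
  set μ := hM.1.eigenvalues with hμdef
  have hμpos : ∀ i, 0 < μ i := hM.eigenvalues_pos
  -- combination = S * N * S
  set N : Matrix (Fin n) (Fin n) ℂ := (t : ℂ) • 1 + ((1 - t : ℝ) : ℂ) • M with hNdef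
  have hcomb : (t : ℂ) • A + ((1 - t : ℝ) : ℂ) • B = S * N * S := by
    rw [hNdef, Matrix.mul_add, Matrix.add_mul, Matrix.mul_smul, Matrix.smul_mul,
      Matrix.mul_smul, Matrix.smul_mul, Matrix.mul_one, hSS, hSMS]
  -- determinant of N via spectral theorem for M
  set U : Matrix (Fin n) (Fin n) ℂ := (hM.1.eigenvectorUnitary : Matrix (Fin n) (Fin n) ℂ) with hUdef
  have hUU : (U : Matrix (Fin n) (Fin n) ℂ) * star U = 1 :=
    Matrix.mem_unitaryGroup_iff.mp hM.1.eigenvectorUnitary.2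
  have hspec : M = U * diagonal (RCLike.ofReal ∘ μ) * star U := hM.1.spectral_theorem
  have hNspec : N = U * ((t : ℂ) • 1 + ((1 - t : ℝ) : ℂ) •
      diagonal (RCLike.ofReal ∘ μ)) * star U := by
    rw [Matrix.mul_add, Matrix.add_mul, Matrix.mul_smul, Matrix.smul_mul,
      Matrix.mul_smul, Matrix.smul_mul, Matrix.mul_one, hUU, hNdef, hspec]
  have hdetN : N.det = ((∏ i, (t + (1 - t) * μ i) : ℝ) : ℂ) := by
    rw [hNspec, Matrix.det_mul_right_comm, hUU, Matrix.one_mul]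
    have : (t : ℂ) • (1 : Matrix (Fin n) (Fin n) ℂ) + ((1 - t : ℝ) : ℂ) •
        diagonal (RCLike.ofReal ∘ μ) =
        diagonal (fun i => ((t + (1 - t) * μ i : ℝ) : ℂ)) := by
      rw [← Matrix.diagonal_one, ← Matrix.diagonal_smul, ← Matrix.diagonal_smul,
        Matrix.diagonal_add]
      congr 1
      funext i
      simp only [Pi.add_apply, Pi.smul_apply, Function.comp_apply, smul_eq_mul, mul_one,
        RCLike.ofReal_alg, Complex.real_smul]
      push_cast
      ring
    rw [this, Matrix.det_diagonal]
    push_cast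
    rfl
  -- expressions for determinants
  have hAdet : A.det = ((A.det.re : ℝ) : ℂ) := by
    have := hdetA
    rw [Complex.lt_def] at this
    exact (Complex.ext (by simp) (by simp [this.2.symm]))
  have hare : (0 : ℝ) < A.det.re := by
    rw [Complex.lt_def] at hdetA; simpa using hdetA.1
  have hdetM : M.det = ((∏ i, μ i : ℝ) : ℂ) := by
    rw [hM.1.det_eq_prod_eigenvalues]
    push_cast
    rfl
  have hBdet : B.det = ((A.det.re * ∏ i, μ i : ℝ) : ℂ) := by
    rw [← hSMS, Matrix.det_mul, Matrix.det_mul, mul_right_comm, hdetSS, hAdet, hdetM,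
      ← Complex.ofReal_mul]
    simp
  have hBre : B.det.re = A.det.re * ∏ i, μ i := by rw [hBdet]; exact Complex.ofReal_re _
  have hcombre : (((t : ℂ) • A + ((1 - t : ℝ) : ℂ) • B).det).re =
      A.det.re * ∏ i, (t + (1 - t) * μ i) := by
    rw [hcomb, Matrix.det_mul, Matrix.det_mul, mul_right_comm, hdetSS, hAdet, hdetN,
      ← Complex.ofReal_mul]
    exact Complex.ofReal_re _
  rw [hcombre, hBre]
  -- now a purely real inequality
  have hcpos : ∀ i, 0 < t + (1 - t) * μ i := by
    intro i
    rcases eq_or_lt_of_le ht0 with h | h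
    · rw [← h]
      simpa using hμpos i
    · exact add_pos_of_pos_of_nonneg h
        (mul_nonneg (by linarith) (hμpos i).le)
  have hμprodpos : (0 : ℝ) < ∏ i, μ i := Finset.prod_pos fun i _ => hμpos i
  have hcprodpos : (0 : ℝ) < ∏ i, (t + (1 - t) * μ i) :=
    Finset.prod_pos fun i _ => hcpos i
  rw [Real.log_mul hare.ne' hcprodpos.ne', Real.log_mul hare.ne' hμprodpos.ne',
    Real.log_prod (fun i _ => (hcpos i).ne'), Real.log_prod (fun i _ => (hμpos i).ne')]
  have key : ∀ i ∈ Finset.univ (α := Fin n),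
      (1 - t) * Real.log (μ i) ≤ Real.log (t + (1 - t) * μ i) := by
    intro i _
    have := strictConcaveOn_log_Ioi.concaveOn.2
      (Set.mem_Ioi.mpr one_pos : (1 : ℝ) ∈ Set.Ioi 0) (Set.mem_Ioi.mpr (hμpos i))
      ht0 (by linarith : (0 : ℝ) ≤ 1 - t) (by ring : t + (1 - t) = 1)
    simpa [smul_eq_mul, Real.log_one] using this
  have hsum : (1 - t) * ∑ i, Real.log (μ i) ≤ ∑ i, Real.log (t + (1 - t) * μ i) := by
    rw [Finset.mul_sum]
    exact Finset.sum_le_sum key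
  nlinarith [hsum]
end

section
/- Water-filling optimality: given positive channel gains λ_1,…,λ_n and power budget P > 0, the allocation P_i = max(μ − 1/λ_i², 0) with μ chosen so that Σ P_i = P maximizes Σ_i log(1 + P_i λ_i²) over all nonnegative allocations (P_1,…,P_n) with Σ P_i ≤ P. -/
/-- Water-filling optimality: the allocation Pᵢ = max(μ − 1/λᵢ², 0) with Σ Pᵢ = P
maximizes Σ log(1 + Pᵢλᵢ²) over nonnegative allocations with Σ Qᵢ ≤ P. -/
theorem water_filling_optimal {n : ℕ} (lam : Fin n → ℝ) (hlam : ∀ i, 0 < lam i)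
    (P : ℝ) (hP : 0 < P) (μ : ℝ) (hμ : 0 < μ)
    (hsum : ∑ i, max (μ - 1 / (lam i) ^ 2) 0 = P)
    (Q : Fin n → ℝ) (hQ : ∀ i, 0 ≤ Q i) (hQsum : ∑ i, Q i ≤ P) :
    ∑ i, Real.log (1 + Q i * (lam i) ^ 2) ≤
      ∑ i, Real.log (1 + max (μ - 1 / (lam i) ^ 2) 0 * (lam i) ^ 2) := by
  set Pw : Fin n → ℝ := fun i => max (μ - 1 / (lam i) ^ 2) 0 with hPw
  have key : ∀ i : Fin n, Real.log (1 + Q i * (lam i) ^ 2) ≤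
      Real.log (1 + Pw i * (lam i) ^ 2) + (Q i - Pw i) / μ := by
    intro i
    have hc : (0:ℝ) < (lam i) ^ 2 := pow_pos (hlam i) 2
    have hPw0 : 0 ≤ Pw i := le_max_right _ _
    have hb : (0:ℝ) < 1 + Pw i * (lam i) ^ 2 := by positivity
    have ha : (0:ℝ) < 1 + Q i * (lam i) ^ 2 := by
      have := hQ i; positivity
    have hlog : Real.log (1 + Q i * (lam i) ^ 2) - Real.log (1 + Pw i * (lam i) ^ 2)
        ≤ (Q i - Pw i) * (lam i) ^ 2 / (1 + Pw i * (lam i) ^ 2) := by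
      rw [← Real.log_div ha.ne' hb.ne']
      have h1 := Real.log_le_sub_one_of_pos (div_pos ha hb)
      have h2 : (1 + Q i * (lam i) ^ 2) / (1 + Pw i * (lam i) ^ 2) - 1
          = (Q i - Pw i) * (lam i) ^ 2 / (1 + Pw i * (lam i) ^ 2) := by
        field_simp
        ring
      linarith [h2 ▸ h1]
    have hfrac : (Q i - Pw i) * (lam i) ^ 2 / (1 + Pw i * (lam i) ^ 2)
        ≤ (Q i - Pw i) / μ := by
      rcases le_or_gt μ (1 / (lam i) ^ 2) with h | h
      · have hP0 : Pw i = 0 := by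
          simp only [hPw]
          exact max_eq_right (by linarith)
        rw [hP0]
        simp only [zero_mul, add_zero, sub_zero, div_one]
        have hc' : (lam i) ^ 2 ≤ 1 / μ := by
          rw [le_div_iff₀ hμ]
          calc (lam i) ^ 2 * μ ≤ (lam i) ^ 2 * (1 / (lam i) ^ 2) :=
                mul_le_mul_of_nonneg_left h hc.le
            _ = 1 := by field_simp [(hlam i).ne']
        calc Q i * (lam i) ^ 2 ≤ Q i * (1 / μ) :=
              mul_le_mul_of_nonneg_left hc' (hQ i)
          _ = Q i / μ := by ring
      · have hP0 : Pw i = μ - 1 / (lam i) ^ 2 := by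
          simp only [hPw]
          exact max_eq_left (by linarith)
        have hden : 1 + Pw i * (lam i) ^ 2 = μ * (lam i) ^ 2 := by
          rw [hP0]; field_simp [(hlam i).ne']; ring
        rw [hden]
        apply le_of_eq
        field_simp [(hlam i).ne']
    linarith
  calc ∑ i, Real.log (1 + Q i * (lam i) ^ 2)
      ≤ ∑ i, (Real.log (1 + Pw i * (lam i) ^ 2) + (Q i - Pw i) / μ) :=
        Finset.sum_le_sum fun i _ => key i
    _ = (∑ i, Real.log (1 + Pw i * (lam i) ^ 2)) + (∑ i, (Q i - Pw i)) / μ := by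
        rw [Finset.sum_add_distrib, Finset.sum_div]
    _ ≤ ∑ i, Real.log (1 + Pw i * (lam i) ^ 2) := by
        have hsub : ∑ i, (Q i - Pw i) = (∑ i, Q i) - P := by
          rw [Finset.sum_sub_distrib, hsum]
        have : (∑ i, (Q i - Pw i)) / μ ≤ 0 := by
          rw [hsub]
          exact div_nonpos_iff.mpr (Or.inr ⟨by linarith, hμ.le⟩)
        linarith
end
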